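/- arXiv:2404.00116 — 2 statements merged into one kernel-verified Lean document; each statement's English description precedes it below -/
import Mathlib

section
/- Strict inequalities for the shock starting times (equations (3.41) and (3.50)): Let f, θ, T be as in the context. (a) For every B > θ, every R ∈ (0, T·f'(B)) and every solution y of the left backward-shock Cauchy problem with data (R,B), one has, with τ := y(T)/f'(B̄) ∈ (0,T): f'(B)·(T − τ) > R, i.e. R/f'(B) < T − y(T)/f'(B̄). (b) For every A < θ, every L ∈ (T·f'(A), 0) and every solution x of the right backward-shock Cauchy problem with data (L,A), one has, with σ := x(T)/f'(Ā) ∈ (0,T): f'(A)·(T − σ) < L, i.e. L/f'(A) < T − x(T)/f'(Ā). -/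
noncomputable section

open Set Filter Topology

/-- The Rankine–Hugoniot speed `λ(u,v) = (f(v) - f(u)) / (v - u)`. -/
def lamF (f : ℝ → ℝ) (u v : ℝ) : ℝ := (f v - f u) / (v - u)

/-- `y` solves the left backward-shock Cauchy problem with data `(R, B)` on
`[R / f'(B), T]`:  `y(R/f'(B)) = 0` and `y'(t) = λ((f')⁻¹((y(t)+R)/t), B̄)`.
Here `finv` denotes the inverse of `deriv f`. -/
def LeftShockSol (f finv : ℝ → ℝ) (T B Bbar R : ℝ) (y : ℝ → ℝ) : Prop :=
  y (R / deriv f B) = 0 ∧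
  ∀ t ∈ Icc (R / deriv f B) T,
    HasDerivWithinAt y (lamF f (finv ((y t + R) / t)) Bbar) (Icc (R / deriv f B) T) t

/-- `x` solves the right backward-shock Cauchy problem with data `(L, A)` on
`[L / f'(A), T]`:  `x(L/f'(A)) = 0` and `x'(t) = λ((f')⁻¹((x(t)+L)/t), Ā)`.
Here `finv` denotes the inverse of `deriv f`. -/
def RightShockSol (f finv : ℝ → ℝ) (T A Abar L : ℝ) (x : ℝ → ℝ) : Prop :=
  x (L / deriv f A) = 0 ∧
  ∀ t ∈ Icc (L / deriv f A) T,
    HasDerivWithinAt x (lamF f (finv ((x t + L) / t)) Abar) (Icc (L / deriv f A) T) t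

lemma lamF_comm (f : ℝ → ℝ) (u v : ℝ) : lamF f u v = lamF f v u := by
  unfold lamF
  rw [← neg_sub (f v), ← neg_sub v, neg_div_neg_eq]

lemma left_case (f : ℝ → ℝ) (hf : ContDiff ℝ 2 f)
    (hmono : StrictMono (deriv f))
    (θ : ℝ) (hθ : deriv f θ = 0)
    (finv : ℝ → ℝ) (hfinv2 : ∀ p : ℝ, deriv f (finv p) = p)
    (T : ℝ) (hT : 0 < T)
    (B Bbar : ℝ) (hB : θ < B) (hBbar : Bbar ≤ θ) (hfB : f Bbar = f B)
    (R : ℝ) (hR : R ∈ Ioo (0:ℝ) (T * deriv f B)) (y : ℝ → ℝ)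
    (hy : LeftShockSol f finv T B Bbar R y) :
    y T / deriv f Bbar ∈ Ioo (0:ℝ) T ∧ R < deriv f B * (T - y T / deriv f Bbar) ∧
      R / deriv f B < T - y T / deriv f Bbar := by
  have hdiff : Differentiable ℝ f := hf.differentiable two_ne_zero
  have hfc : Continuous f := hdiff.continuous
  -- slope lemma
  have slope_mem : ∀ u v : ℝ, u < v →
      deriv f u < lamF f u v ∧ lamF f u v < deriv f v := by
    intro u v huv
    obtain ⟨c, hc, hceq⟩ := exists_deriv_eq_slope f huv (hfc.continuousOn)
      (fun x _ => (hdiff x).differentiableWithinAt)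
    constructor
    · rw [lamF, ← hceq]; exact hmono hc.1
    · rw [lamF, ← hceq]; exact hmono hc.2
  -- f is a strict min at θ in the sense that values on each side determined
  have hmid : ∀ u : ℝ, Bbar < u → u < B → f u < f B := by
    intro u h1 h2
    by_contra hcon
    push_neg at hcon
    have s1 := (slope_mem Bbar u h1).1
    have s2 := (slope_mem u B h2).2
    obtain ⟨c1, hc1, he1⟩ := exists_deriv_eq_slope f h1 (hfc.continuousOn)
      (fun x _ => (hdiff x).differentiableWithinAt)
    obtain ⟨c2, hc2, he2⟩ := exists_deriv_eq_slope f h2 (hfc.continuousOn)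
      (fun x _ => (hdiff x).differentiableWithinAt)
    have hnum1 : 0 ≤ f u - f Bbar := by rw [hfB]; linarith
    have hnum2 : f B - f u ≤ 0 := by linarith
    have hd1 : 0 ≤ deriv f c1 := by
      rw [he1]; exact div_nonneg hnum1 (by linarith)
    have hd2 : deriv f c2 ≤ 0 := by
      rw [he2]
      exact div_nonpos_of_nonpos_of_nonneg hnum2 (by linarith)
    have : c1 < c2 := lt_trans hc1.2 hc2.1
    have := hmono this
    linarith
  have hBbarθ : Bbar < θ := by
    rcases lt_or_eq_of_le hBbar with h | h
    · exact h
    · exfalso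
      subst h
      obtain ⟨c, hc, hce⟩ := exists_deriv_eq_slope f hB (hfc.continuousOn)
        (fun x _ => (hdiff x).differentiableWithinAt)
      have h1 : 0 < deriv f c := by rw [← hθ]; exact hmono hc.1
      rw [hce] at h1
      have : 0 < (f B - f Bbar) / (B - Bbar) := h1
      rw [hfB, sub_self, zero_div] at this
      exact lt_irrefl 0 this
  set d : ℝ := deriv f B with hd
  set c : ℝ := deriv f Bbar with hc
  have hdpos : 0 < d := by rw [hd, ← hθ]; exact hmono hB
  have hcneg : c < 0 := by rw [hc, ← hθ]; exact hmono hBbarθ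
  set t0 : ℝ := R / d with ht0
  have ht0pos : 0 < t0 := div_pos hR.1 hdpos
  have ht0T : t0 < T := by
    rw [ht0, div_lt_iff₀ hdpos]
    linarith [hR.2]
  have ht0d : t0 * d = R := by
    rw [ht0]; field_simp
  have hycont : ContinuousOn y (Icc t0 T) := fun t ht => (hy.2 t ht).continuousWithinAt
  have hder : ∀ x ∈ Ioo t0 T,
      HasDerivAt y (lamF f (finv ((y x + R) / x)) Bbar) x := by
    intro x hx
    exact (hy.2 x (Ioo_subset_Icc_self hx)).hasDerivAt (Icc_mem_nhds hx.1 hx.2)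
  -- Claim A : c * t < y t + R on Icc
  have claimA : ∀ t ∈ Icc t0 T, c * t < y t + R := by
    by_contra hcon
    push_neg at hcon
    obtain ⟨tb, htb, hble⟩ := hcon
    set S : Set ℝ := {t ∈ Icc t0 T | y t + R ≤ c * t} with hS
    have hSne : S.Nonempty := ⟨tb, htb, hble⟩
    have hSbdd : BddBelow S := ⟨t0, fun s hs => hs.1.1⟩
    have hSclosed : IsClosed S := by
      have : S = Icc t0 T ∩ (fun t => y t + R - c * t) ⁻¹' Iic 0 := by
        ext t
        simp only [hS, mem_sep_iff, mem_inter_iff, mem_preimage, mem_Iic]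
        constructor
        · rintro ⟨h1, h2⟩; exact ⟨h1, by linarith⟩
        · rintro ⟨h1, h2⟩; exact ⟨h1, by linarith⟩
      rw [this]
      exact ContinuousOn.preimage_isClosed_of_isClosed
        (((hycont.add continuousOn_const).sub ((continuous_const.mul continuous_id).continuousOn)))
        isClosed_Icc isClosed_Iic
    set t1 : ℝ := sInf S with ht1
    have ht1S : t1 ∈ S := hSclosed.csInf_mem hSne hSbdd
    have ht1Icc : t1 ∈ Icc t0 T := ht1S.1
    have ht0t1 : t0 < t1 := by
      rcases lt_or_eq_of_le ht1Icc.1 with h | h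
      · exact h
      · exfalso
        have := ht1S.2
        rw [← h, hy.1] at this
        nlinarith [hR.1, ht0pos]
    have hnotS : ∀ s ∈ Ico t0 t1, c * s < y s + R := by
      intro s hs
      by_contra hcon2
      push_neg at hcon2
      have : s ∈ S := ⟨⟨hs.1, le_trans (le_of_lt hs.2) ht1Icc.2⟩, hcon2⟩
      have := csInf_le hSbdd this
      rw [← ht1] at this
      linarith [hs.2]
    -- g := y - c * t is strictly increasing on [t0, t1]
    have hgmono : StrictMonoOn (fun t => y t - c * t) (Icc t0 t1) := by
      apply strictMonoOn_of_deriv_pos (convex_Icc t0 t1)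
      · exact (hycont.mono (Icc_subset_Icc_right ht1Icc.2)).sub
          ((continuous_const.mul continuous_id).continuousOn)
      · intro x hx
        rw [interior_Icc] at hx
        have hxIoo : x ∈ Ioo t0 T := ⟨hx.1, lt_of_lt_of_le hx.2 ht1Icc.2⟩
        have hxpos : 0 < x := lt_trans ht0pos hx.1
        have hdx : HasDerivAt (fun t => y t - c * t)
            (lamF f (finv ((y x + R) / x)) Bbar - c) x := by
          have h2 : HasDerivAt (fun t : ℝ => c * t) (c * 1) x :=
            (hasDerivAt_id x).const_mul c
          rw [mul_one] at h2
          exact (hder x hxIoo).sub h2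
        rw [hdx.deriv]
        have hz : c < (y x + R) / x := by
          rw [lt_div_iff₀ hxpos]
          have := hnotS x ⟨le_of_lt hx.1, hx.2⟩
          linarith [this]
        set u := finv ((y x + R) / x) with hu
        have hub : Bbar < u :=
          hmono.lt_iff_lt.mp (by rw [hfinv2]; exact hz)
        rw [lamF_comm]
        linarith [(slope_mem Bbar u hub).1]
    have := hgmono ⟨le_refl t0, le_of_lt ht0t1⟩ ⟨le_of_lt ht0t1, le_refl t1⟩ ht0t1
    simp only [show y t0 = 0 from hy.1] at this
    have h2 := ht1S.2
    nlinarith [ht0pos]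
  -- key derivative bounds at interior points
  have hlow : ∀ x ∈ Ioo t0 T, c < lamF f (finv ((y x + R) / x)) Bbar := by
    intro x hx
    have hxpos : 0 < x := lt_trans ht0pos hx.1
    have hz : c < (y x + R) / x := by
      rw [lt_div_iff₀ hxpos]
      have := claimA x (Ioo_subset_Icc_self hx)
      linarith [this]
    set u := finv ((y x + R) / x) with hu
    have hub : Bbar < u := by
      have : deriv f Bbar < deriv f u := by rw [hfinv2]; exact hz
      exact hmono.lt_iff_lt.mp this
    rw [lamF_comm]
    exact (slope_mem Bbar u hub).1
  -- Phase 3: for every B' > B, y t + R < t * deriv f B'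
  have hubar : ∀ x ∈ Icc t0 T, Bbar < finv ((y x + R) / x) := by
    intro x hx
    have hxpos : 0 < x := lt_of_lt_of_le ht0pos hx.1
    have hz : c < (y x + R) / x := by
      rw [lt_div_iff₀ hxpos]
      linarith [claimA x hx]
    exact hmono.lt_iff_lt.mp (by rw [hfinv2]; exact hz)
  have phase3 : ∀ B' : ℝ, B < B' → ∀ t ∈ Icc t0 T, y t + R < t * deriv f B' := by
    intro B' hBB' t ht
    set d' : ℝ := deriv f B' with hd'
    have hdd' : d < d' := hmono hBB'
    have hRt0d' : R < t0 * d' := by nlinarith [ht0pos]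
    by_contra hcon
    push_neg at hcon
    set S : Set ℝ := {t ∈ Icc t0 T | t * d' ≤ y t + R} with hS
    have hSne : S.Nonempty := ⟨t, ht, hcon⟩
    have hSbdd : BddBelow S := ⟨t0, fun s hs => hs.1.1⟩
    have hSclosed : IsClosed S := by
      have : S = Icc t0 T ∩ (fun t => y t + R - t * d') ⁻¹' Ici 0 := by
        ext s
        simp only [hS, mem_sep_iff, mem_inter_iff, mem_preimage, mem_Ici]
        constructor
        · rintro ⟨h1, h2⟩; exact ⟨h1, by linarith⟩
        · rintro ⟨h1, h2⟩; exact ⟨h1, by linarith⟩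
      rw [this]
      exact ContinuousOn.preimage_isClosed_of_isClosed
        ((hycont.add continuousOn_const).sub ((continuous_id.mul continuous_const).continuousOn))
        isClosed_Icc isClosed_Ici
    set t1 : ℝ := sInf S with ht1
    have ht1S : t1 ∈ S := hSclosed.csInf_mem hSne hSbdd
    have ht1Icc : t1 ∈ Icc t0 T := ht1S.1
    have ht0t1 : t0 < t1 := by
      rcases lt_or_eq_of_le ht1Icc.1 with h | h
      · exact h
      · exfalso
        have := ht1S.2
        rw [← h, hy.1] at this
        simp only [zero_add] at this
        linarith
    have hnotS : ∀ s ∈ Ico t0 t1, y s + R < s * d' := by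
      intro s hs
      by_contra hcon2
      push_neg at hcon2
      have : s ∈ S := ⟨⟨hs.1, le_trans (le_of_lt hs.2) ht1Icc.2⟩, hcon2⟩
      have := csInf_le hSbdd this
      rw [← ht1] at this
      linarith [hs.2]
    have hganti : StrictAntiOn (fun t => y t - t * d') (Icc t0 t1) := by
      apply strictAntiOn_of_deriv_neg (convex_Icc t0 t1)
      · exact (hycont.mono (Icc_subset_Icc_right ht1Icc.2)).sub
          ((continuous_id.mul continuous_const).continuousOn)
      · intro x hx
        rw [interior_Icc] at hx
        have hxIoo : x ∈ Ioo t0 T := ⟨hx.1, lt_of_lt_of_le hx.2 ht1Icc.2⟩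
        have hxIcc : x ∈ Icc t0 T := Ioo_subset_Icc_self hxIoo
        have hxpos : 0 < x := lt_trans ht0pos hx.1
        have hdx : HasDerivAt (fun t => y t - t * d')
            (lamF f (finv ((y x + R) / x)) Bbar - d') x := by
          have h2 : HasDerivAt (fun t : ℝ => t * d') (1 * d') x :=
            (hasDerivAt_id x).mul_const d'
          rw [one_mul] at h2
          exact (hder x hxIoo).sub h2
        rw [hdx.deriv]
        have hz : (y x + R) / x < d' := by
          rw [div_lt_iff₀ hxpos]
          linarith [hnotS x ⟨le_of_lt hx.1, hx.2⟩]
        set u := finv ((y x + R) / x) with hu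
        have hub : Bbar < u := hubar x hxIcc
        have huB' : deriv f u < d' := by rw [hfinv2]; exact hz
        have := (slope_mem Bbar u hub).2
        rw [← lamF_comm] at this
        linarith
    have := hganti ⟨le_refl t0, le_of_lt ht0t1⟩ ⟨le_of_lt ht0t1, le_refl t1⟩ ht0t1
    simp only [show y t0 = 0 from hy.1] at this
    have h2 := ht1S.2
    linarith
  -- Phase 4: limit
  have qle : ∀ t ∈ Icc t0 T, y t + R ≤ t * d := by
    intro t ht
    have htend : Tendsto (fun B' => t * deriv f B') (𝓝[>] B) (𝓝 (t * d)) := by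
      exact ((continuous_const.mul (hf.continuous_deriv one_le_two)).tendsto B).mono_left
        nhdsWithin_le_nhds
    refine ge_of_tendsto htend ?_
    filter_upwards [self_mem_nhdsWithin] with B' hB'
    exact le_of_lt (phase3 B' hB' t ht)
  -- Phase 5: strict bound for t > t0
  have qstrict : ∀ t ∈ Ioc t0 T, y t + R < t * d := by
    have hganti : StrictAntiOn (fun t => y t - t * d) (Icc t0 T) := by
      apply strictAntiOn_of_deriv_neg (convex_Icc t0 T)
      · exact hycont.sub ((continuous_id.mul continuous_const).continuousOn)
      · intro x hx
        rw [interior_Icc] at hx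
        have hxIcc : x ∈ Icc t0 T := Ioo_subset_Icc_self hx
        have hxpos : 0 < x := lt_trans ht0pos hx.1
        have hdx : HasDerivAt (fun t => y t - t * d)
            (lamF f (finv ((y x + R) / x)) Bbar - d) x := by
          have h2 : HasDerivAt (fun t : ℝ => t * d) (1 * d) x :=
            (hasDerivAt_id x).mul_const d
          rw [one_mul] at h2
          exact (hder x hx).sub h2
        rw [hdx.deriv]
        have hz : (y x + R) / x ≤ d := by
          rw [div_le_iff₀ hxpos]
          linarith [qle x hxIcc]
        set u := finv ((y x + R) / x) with hu
        have hub : Bbar < u := hubar x hxIcc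
        have huB : deriv f u ≤ d := by rw [hfinv2]; exact hz
        have := (slope_mem Bbar u hub).2
        rw [← lamF_comm] at this
        linarith
    intro t ht
    have := hganti ⟨le_refl t0, le_of_lt ht0T⟩ ⟨le_of_lt ht.1, ht.2⟩ ht.1
    simp only [show y t0 = 0 from hy.1] at this
    linarith
  -- Phase 6: y T < 0
  have hyT : y T < 0 := by
    have hyanti : StrictAntiOn y (Icc t0 T) := by
      apply strictAntiOn_of_deriv_neg (convex_Icc t0 T)
      · exact hycont
      · intro x hx
        rw [interior_Icc] at hx
        have hxIcc : x ∈ Icc t0 T := Ioo_subset_Icc_self hx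
        have hxpos : 0 < x := lt_trans ht0pos hx.1
        rw [(hder x hx).deriv]
        have hz : (y x + R) / x < d := by
          rw [div_lt_iff₀ hxpos]
          linarith [qstrict x ⟨hx.1, le_of_lt hx.2⟩]
        set u := finv ((y x + R) / x) with hu
        have hub : Bbar < u := hubar x hxIcc
        have huB : u < B := hmono.lt_iff_lt.mp (by rw [hfinv2]; exact hz)
        have hfu : f u < f B := hmid u hub huB
        rw [lamF_comm, lamF]
        apply div_neg_of_neg_of_pos
        · rw [hfB]; linarith
        · linarith
    have := hyanti ⟨le_refl t0, le_of_lt ht0T⟩ ⟨le_of_lt ht0T, le_refl T⟩ ht0T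
    rw [hy.1] at this
    exact this
  -- Phase 2: y T > c * (T - t0)
  have hyTlow : c * (T - t0) < y T := by
    have hgmono : StrictMonoOn (fun t => y t - c * t) (Icc t0 T) := by
      apply strictMonoOn_of_deriv_pos (convex_Icc t0 T)
      · exact hycont.sub ((continuous_const.mul continuous_id).continuousOn)
      · intro x hx
        rw [interior_Icc] at hx
        have hdx : HasDerivAt (fun t => y t - c * t)
            (lamF f (finv ((y x + R) / x)) Bbar - c) x := by
          have h2 : HasDerivAt (fun t : ℝ => c * t) (c * 1) x :=
            (hasDerivAt_id x).const_mul c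
          rw [mul_one] at h2
          exact (hder x hx).sub h2
        rw [hdx.deriv]
        linarith [hlow x hx]
    have := hgmono ⟨le_refl t0, le_of_lt ht0T⟩ ⟨le_of_lt ht0T, le_refl T⟩ ht0T
    simp only [show y t0 = 0 from hy.1] at this
    linarith
  -- conclude
  set τ : ℝ := y T / c with hτ
  have hτ1 : τ < T - t0 := by
    rw [hτ, div_lt_iff_of_neg hcneg]
    nlinarith [hyTlow]
  have hτpos : 0 < τ := div_pos_of_neg_of_neg hyT hcneg
  refine ⟨⟨hτpos, by linarith⟩, ?_, by linarith⟩
  have h1 : t0 < T - τ := by linarith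
  rw [ht0, div_lt_iff₀ hdpos] at h1
  linarith [h1]

/-- **Equations (3.41) and (3.50)**: strict inequalities for the shock starting times. -/
theorem shock_starting_time_inequalities
    (f : ℝ → ℝ) (a : ℝ) (ha : 0 < a) (hf : ContDiff ℝ 2 f)
    (hf2 : ∀ u : ℝ, a ≤ deriv (deriv f) u)
    (θ : ℝ) (hθ : deriv f θ = 0)
    (finv : ℝ → ℝ) (hfinv1 : ∀ u : ℝ, finv (deriv f u) = u)
    (hfinv2 : ∀ p : ℝ, deriv f (finv p) = p)
    (T : ℝ) (hT : 0 < T) :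
    (∀ B Bbar : ℝ, θ < B → Bbar ≤ θ → f Bbar = f B →
      ∀ R ∈ Ioo (0:ℝ) (T * deriv f B), ∀ y : ℝ → ℝ,
        LeftShockSol f finv T B Bbar R y →
          y T / deriv f Bbar ∈ Ioo (0:ℝ) T ∧
          R < deriv f B * (T - y T / deriv f Bbar) ∧
          R / deriv f B < T - y T / deriv f Bbar) ∧
    (∀ A Abar : ℝ, A < θ → θ ≤ Abar → f Abar = f A →
      ∀ L ∈ Ioo (T * deriv f A) (0:ℝ), ∀ x : ℝ → ℝ,
        RightShockSol f finv T A Abar L x →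
          x T / deriv f Abar ∈ Ioo (0:ℝ) T ∧
          deriv f A * (T - x T / deriv f Abar) < L ∧
          L / deriv f A < T - x T / deriv f Abar) := by
  have hmono : StrictMono (deriv f) :=
    strictMono_of_deriv_pos (fun x => lt_of_lt_of_le ha (hf2 x))
  constructor
  · intro B Bbar hB hBbar hfB R hR y hy
    exact left_case f hf hmono θ hθ finv hfinv2 T hT B Bbar hB hBbar hfB R hR y hy
  · intro A Abar hA hAbar hfA L hL x hx
    set g : ℝ → ℝ := fun u => f (-u) with hg
    have hgC : ContDiff ℝ 2 g := hf.comp (contDiff_id.neg)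
    have hderivg : ∀ u : ℝ, deriv g u = -(deriv f (-u)) := fun u => deriv_comp_neg f u
    have hmonog : StrictMono (deriv g) := by
      intro u v huv
      rw [hderivg u, hderivg v, neg_lt_neg_iff]
      exact hmono (by linarith)
    set ginv : ℝ → ℝ := fun p => -finv (-p) with hginv
    have hginv2 : ∀ p : ℝ, deriv g (ginv p) = p := by
      intro p
      rw [hginv]
      simp only [hderivg, neg_neg, hfinv2]
    have hθg : deriv g (-θ) = 0 := by rw [hderivg, neg_neg, hθ, neg_zero]
    have hdgA : deriv g (-A) = -(deriv f A) := by rw [hderivg, neg_neg]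
    have hdgAbar : deriv g (-Abar) = -(deriv f Abar) := by rw [hderivg, neg_neg]
    have hkey : ∀ u v : ℝ, lamF g (-u) (-v) = -(lamF f u v) := by
      intro u v
      unfold lamF
      rw [hg]
      simp only [neg_neg]
      rw [show (-v) - (-u) = -(v - u) by ring, div_neg]
    have ht0eq : (-L) / deriv g (-A) = L / deriv f A := by
      rw [hdgA, neg_div_neg_eq]
    have hy : LeftShockSol g ginv T (-A) (-Abar) (-L) (fun t => -(x t)) := by
      constructor
      · rw [ht0eq]
        simp [hx.1]
      · intro t ht
        rw [ht0eq] at ht ⊢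
        have hd := (hx.2 t ht).neg
        have heq : lamF g (ginv ((-(x t) + -L) / t)) (-Abar)
            = -(lamF f (finv ((x t + L) / t)) Abar) := by
          have h1 : (-(x t) + -L) / t = -((x t + L) / t) := by
            rw [← neg_div]; ring_nf
          rw [h1, hginv]
          simp only [neg_neg]
          exact hkey (finv ((x t + L) / t)) Abar
        rw [heq]
        exact hd
    have := left_case g hgC hmonog (-θ) hθg ginv hginv2 T hT (-A) (-Abar)
      (by linarith) (by linarith)
      (by rw [hg]; simp only [neg_neg]; rw [hfA])
      (-L) (by refine ⟨by linarith [hL.2], ?_⟩; rw [hdgA]; nlinarith [hL.1])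
      (fun t => -(x t)) hy
    obtain ⟨hmem, h2, h3⟩ := this
    have hτeq : (-(x T)) / deriv g (-Abar) = x T / deriv f Abar := by
      rw [hdgAbar, neg_div_neg_eq]
    rw [hτeq] at hmem h2 h3
    rw [hdgA] at h2
    rw [ht0eq] at h3
    exact ⟨hmem, by linarith, h3⟩
end
end

section
/- Sharp bound for the Oleinik-type quotient Φ (equation (6.18) in the proof of Proposition 6.1): Let f, θ be as in the context. For real x, t with 0 < x < √2·t, set u_{x,t} := (f')⁻¹((2x/t)^{1/3}). Then u_{x,t} > θ, t·f'(u_{x,t}) > x, 3·(t/2)^{2/3} − x^{2/3} > 0, and for every u ≥ θ the denominator f'(u)²·(t·f'(u) − x) + x is strictly positive and the quantity Φ(x,t,u) := f'(u)² / ( f'(u)²·(t·f'(u) − x) + x ) satisfies Φ(x,t,u) ≤ Φ(x,t,u_{x,t}) = 1 / ( x^{1/3}·( 3·(t/2)^{2/3} − x^{2/3} ) ) < x^{−1/3}·(2/t)^{2/3}. -/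
set_option maxHeartbeats 1000000


noncomputable section

open Real

/-- **Equation (6.18) in the proof of Proposition 6.1**: sharp bound for the
Oleinik-type quotient `Φ(x,t,u) = f'(u)² / (f'(u)²(t f'(u) - x) + x)`. -/
theorem phi_quotient_sharp_bound
    (f : ℝ → ℝ) (a : ℝ) (ha : 0 < a) (hf : ContDiff ℝ 2 f)
    (hf2 : ∀ u : ℝ, a ≤ deriv (deriv f) u)
    (θ : ℝ) (hθ : deriv f θ = 0)
    (finv : ℝ → ℝ) (hfinv1 : ∀ u : ℝ, finv (deriv f u) = u)
    (hfinv2 : ∀ p : ℝ, deriv f (finv p) = p)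
    (x t : ℝ) (hx : 0 < x) (hxt : x < Real.sqrt 2 * t)
    (u : ℝ) (hu : u = finv ((2 * x / t) ^ ((1:ℝ)/3))) :
    θ < u ∧
    x < t * deriv f u ∧
    0 < 3 * (t / 2) ^ ((2:ℝ)/3) - x ^ ((2:ℝ)/3) ∧
    (∀ v : ℝ, θ ≤ v → 0 < (deriv f v) ^ 2 * (t * deriv f v - x) + x) ∧
    (∀ v : ℝ, θ ≤ v →
      (deriv f v) ^ 2 / ((deriv f v) ^ 2 * (t * deriv f v - x) + x) ≤
        (deriv f u) ^ 2 / ((deriv f u) ^ 2 * (t * deriv f u - x) + x)) ∧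
    (deriv f u) ^ 2 / ((deriv f u) ^ 2 * (t * deriv f u - x) + x) =
      1 / (x ^ ((1:ℝ)/3) * (3 * (t / 2) ^ ((2:ℝ)/3) - x ^ ((2:ℝ)/3))) ∧
    (deriv f u) ^ 2 / ((deriv f u) ^ 2 * (t * deriv f u - x) + x) <
      x ^ (-(1:ℝ)/3) * (2 / t) ^ ((2:ℝ)/3) := by
  have h2pos : (0:ℝ) < Real.sqrt 2 := Real.sqrt_pos.mpr (by norm_num)
  have hs2 : Real.sqrt 2 ^ 2 = 2 := Real.sq_sqrt (by norm_num)
  have ht : 0 < t := by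
    rcases le_or_gt t 0 with h | h
    · exfalso; nlinarith [mul_nonpos_of_nonneg_of_nonpos h2pos.le h]
    · exact h
  have hx2 : x ^ 2 < 2 * t ^ 2 := by
    nlinarith [sq_nonneg (Real.sqrt 2 * t - x), mul_lt_mul_of_pos_left hxt hx]
  set p : ℝ := (2 * x / t) ^ ((1:ℝ)/3) with hp
  have hbase : 0 < 2 * x / t := by positivity
  have hppos : 0 < p := rpow_pos_of_pos hbase _
  have hdu : deriv f u = p := by rw [hu, hfinv2]
  have hp3 : p ^ 3 = 2 * x / t := by
    rw [hp, ← Real.rpow_natCast ((2*x/t) ^ ((1:ℝ)/3)) 3, ← Real.rpow_mul hbase.le]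
    norm_num
  have htp3 : t * p ^ 3 = 2 * x := by rw [hp3]; field_simp
  have hmono : StrictMono (deriv f) :=
    strictMono_of_deriv_pos fun v => lt_of_lt_of_le ha (hf2 v)
  have h1 : θ < u := by
    have h' : deriv f θ < deriv f u := by rw [hθ, hdu]; exact hppos
    exact hmono.lt_iff_lt.mp h'
  have hq0 : ∀ v, θ ≤ v → 0 ≤ deriv f v := fun v hv => by
    rw [← hθ]; exact hmono.monotone hv
  have h2 : x < t * deriv f u := by
    rw [hdu]
    have h3' : x ^ 3 < (t * p) ^ 3 := by
      have he : (t*p)^3 = t^2 * (t * p^3) := by ring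
      rw [he, htp3]; nlinarith
    exact lt_of_pow_lt_pow_left₀ 3 (by positivity) h3'
  -- rpow facts
  have hp2 : p ^ 2 = (2 * x / t) ^ ((2:ℝ)/3) := by
    rw [hp, ← Real.rpow_natCast ((2*x/t) ^ ((1:ℝ)/3)) 2, ← Real.rpow_mul hbase.le]
    norm_num
  have hA : (t/2) ^ ((2:ℝ)/3) * p ^ 2 = x ^ ((2:ℝ)/3) := by
    rw [hp2, ← Real.mul_rpow (by positivity) hbase.le]
    congr 1
    field_simp
  have hx13 : x ^ ((1:ℝ)/3) * x ^ ((2:ℝ)/3) = x := by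
    rw [← Real.rpow_add hx]; norm_num
  have hCpos : (0:ℝ) < (t/2) ^ ((2:ℝ)/3) := by positivity
  have hBpos : (0:ℝ) < x ^ ((1:ℝ)/3) := by positivity
  have hX : x ^ ((2:ℝ)/3) < 2 * (t/2) ^ ((2:ℝ)/3) := by
    have h1' : x ^ ((2:ℝ)/3) < (Real.sqrt 2 * t) ^ ((2:ℝ)/3) :=
      Real.rpow_lt_rpow hx.le hxt (by norm_num)
    have e1 : (Real.sqrt 2 * t) ^ ((2:ℝ)/3) = (2:ℝ)^((1:ℝ)/3) * t ^ ((2:ℝ)/3) := by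
      rw [Real.sqrt_eq_rpow, Real.mul_rpow (by positivity) ht.le,
        ← Real.rpow_mul (by norm_num : (0:ℝ) ≤ 2)]
      norm_num
    have e2 : (t/2) ^ ((2:ℝ)/3) = t ^ ((2:ℝ)/3) / (2:ℝ)^((2:ℝ)/3) :=
      Real.div_rpow ht.le (by norm_num : (0:ℝ) ≤ 2) ((2:ℝ)/3)
    have e3 : (2:ℝ) = (2:ℝ)^((1:ℝ)/3) * (2:ℝ)^((2:ℝ)/3) := by
      rw [← Real.rpow_add (by norm_num : (0:ℝ) < 2)]; norm_num
    have h2pow : (0:ℝ) < (2:ℝ)^((2:ℝ)/3) := by positivity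
    rw [e2]
    calc x ^ ((2:ℝ)/3) < (2:ℝ)^((1:ℝ)/3) * t ^ ((2:ℝ)/3) := by rw [← e1]; exact h1'
      _ = 2 * (t ^ ((2:ℝ)/3) / (2:ℝ)^((2:ℝ)/3)) := by
          rw [mul_div_assoc']
          rw [eq_div_iff h2pow.ne']
          linear_combination (-t ^ ((2:ℝ)/3)) * e3
  have h3 : 0 < 3 * (t / 2) ^ ((2:ℝ)/3) - x ^ ((2:ℝ)/3) := by linarith
  -- denominator positivity
  have hden : ∀ q : ℝ, 0 ≤ q → 0 < q^2*(t*q - x) + x := by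
    intro q hq
    nlinarith [mul_nonneg (sq_nonneg (3*t*q - 2*x)) (by positivity : (0:ℝ) ≤ 3*t*q + x),
      mul_pos hx (by nlinarith : (0:ℝ) < 27*t^2 - 4*x^2), mul_pos ht ht]
  have h4 : ∀ v : ℝ, θ ≤ v → 0 < (deriv f v) ^ 2 * (t * deriv f v - x) + x :=
    fun v hv => hden _ (hq0 v hv)
  have hgp : p^2*(t*p - x) + x = 3*x - x*p^2 := by linear_combination htp3
  have hdppos : 0 < p^2*(t*p - x) + x := hden p hppos.le
  -- main inequality
  have h5 : ∀ v : ℝ, θ ≤ v →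
      (deriv f v) ^ 2 / ((deriv f v) ^ 2 * (t * deriv f v - x) + x) ≤
        (deriv f u) ^ 2 / ((deriv f u) ^ 2 * (t * deriv f u - x) + x) := by
    intro v hv
    set q : ℝ := deriv f v with hqd
    have hq : 0 ≤ q := hq0 v hv
    rw [hdu, div_le_div_iff₀ (hden q hq) (hden p hppos.le)]
    have hE : p * (p^2*(q^2*(t*q - x) + x) - q^2*(3*x - x*p^2)) = x*(q-p)^2*(2*q+p) := by
      linear_combination q^3 * htp3
    have hK : 0 ≤ x*(q-p)^2*(2*q+p) :=
      mul_nonneg (mul_nonneg hx.le (sq_nonneg (q-p))) (by linarith)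
    have hkey : 0 ≤ p^2*(q^2*(t*q - x) + x) - q^2*(3*x - x*p^2) := by
      have hpd : 0 ≤ p * (p^2*(q^2*(t*q - x) + x) - q^2*(3*x - x*p^2)) := by
        rw [hE]; exact hK
      exact nonneg_of_mul_nonneg_right hpd hppos
    nlinarith [hkey, hgp]
  have h6 : (deriv f u) ^ 2 / ((deriv f u) ^ 2 * (t * deriv f u - x) + x) =
      1 / (x ^ ((1:ℝ)/3) * (3 * (t / 2) ^ ((2:ℝ)/3) - x ^ ((2:ℝ)/3))) := by
    rw [hdu, hgp]
    have hd1 : 0 < 3*x - x*p^2 := by rw [← hgp]; exact hdppos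
    have hd2 : 0 < x ^ ((1:ℝ)/3) * (3 * (t / 2) ^ ((2:ℝ)/3) - x ^ ((2:ℝ)/3)) :=
      mul_pos hBpos h3
    rw [div_eq_div_iff hd1.ne' hd2.ne']
    linear_combination (3*x^((1:ℝ)/3))*hA + (3 - p^2)*hx13
  refine ⟨h1, h2, h3, h4, h5, h6, ?_⟩
  rw [h6]
  have hrhs : x ^ (-(1:ℝ)/3) * (2 / t) ^ ((2:ℝ)/3) =
      1 / (x ^ ((1:ℝ)/3) * (t/2) ^ ((2:ℝ)/3)) := by
    rw [show -(1:ℝ)/3 = -((1:ℝ)/3) by norm_num, Real.rpow_neg hx.le,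
      show (2/t : ℝ) = (t/2)⁻¹ by field_simp,
      Real.inv_rpow (by positivity : (0:ℝ) ≤ t/2)]
    field_simp
  rw [hrhs]
  exact div_lt_div_of_pos_left one_pos (mul_pos hBpos hCpos) (by nlinarith [hX, hBpos, hCpos])
end
end
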